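/- Let α > 0, 0 < β < α, s > 0, and let V : ℝ² → ℝ be measurable with V ≥ 0 and [V]_α := sup_{t>0} t^{1+α/2} ∫_{{x : |x|² V(x) > t}} |x|^{−2} dx < ∞. Then ∫_{ℝ²} (|x|² V(x) − s)_+^{1+β/2} |x|^{−2} dx ≤ (Γ(2+β/2) Γ((α−β)/2) / Γ(1+α/2)) · s^{(β−α)/2} · [V]_α. (Layer-cake estimate used in the interpolation proof of the weak-type CLR bound.) -/

import Mathlib

open MeasureTheory
open scoped ENNReal

open Set


lemma lintegral_image_deriv {s : Set ℝ} {f : ℝ → ℝ} {f' : ℝ → ℝ}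
    (hs : MeasurableSet s) (hf' : ∀ x ∈ s, HasDerivWithinAt f (f' x) s x)
    (hf : Set.InjOn f s) (g : ℝ → ℝ≥0∞) :
    ∫⁻ x in f '' s, g x = ∫⁻ x in s, ENNReal.ofReal |f' x| * g (f x) := by
  simpa only [ContinuousLinearMap.det_toSpanSingleton] using
    MeasureTheory.lintegral_image_eq_lintegral_abs_det_fderiv_mul volume hs
      (fun x hx => (hf' x hx).hasFDerivWithinAt) hf g

lemma real_beta {p q : ℝ} (hp : 0 < p) (hq : 0 < q) :
    ∫ x in (0:ℝ)..1, x ^ (p-1) * (1-x) ^ (q-1) =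
      Real.Gamma p * Real.Gamma q / Real.Gamma (p+q) := by
  have h := Complex.Gamma_mul_Gamma_eq_betaIntegral (s := (p:ℂ)) (t := (q:ℂ))
    (by simpa using hp) (by simpa using hq)
  have hbeta : Complex.betaIntegral p q =
      ((∫ x in (0:ℝ)..1, x ^ (p-1) * (1-x) ^ (q-1) : ℝ) : ℂ) := by
    rw [Complex.betaIntegral, ← intervalIntegral.integral_ofReal]
    apply intervalIntegral.integral_congr
    intro x hx
    rw [uIcc_of_le (by norm_num : (0:ℝ) ≤ 1)] at hx
    simp only []
    rw [Complex.ofReal_mul, Complex.ofReal_cpow hx.1, Complex.ofReal_cpow (by linarith [hx.2] : (0:ℝ) ≤ 1 - x)]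
    push_cast
    ring
  rw [hbeta, ← Complex.ofReal_add] at h
  have h2 : Real.Gamma p * Real.Gamma q =
      Real.Gamma (p+q) * ∫ x in (0:ℝ)..1, x ^ (p-1) * (1-x) ^ (q-1) := by
    rw [Complex.Gamma_ofReal, Complex.Gamma_ofReal, Complex.Gamma_ofReal] at h
    exact_mod_cast h
  rw [h2]
  rw [mul_div_cancel_left₀ _ (Real.Gamma_pos_of_pos (by linarith : (0:ℝ) < p + q)).ne']

lemma beta_coe_eq {p q : ℝ} {x : ℝ} (hx : x ∈ Icc (0:ℝ) 1) :
    ((x:ℂ)) ^ ((p:ℂ)-1) * (1-(x:ℂ)) ^ ((q:ℂ)-1) = ((x^(p-1)*(1-x)^(q-1) : ℝ) : ℂ) := by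
  rw [Complex.ofReal_mul, Complex.ofReal_cpow hx.1,
    Complex.ofReal_cpow (by linarith [hx.2] : (0:ℝ) ≤ 1 - x)]
  push_cast
  ring

lemma beta_integrable {p q : ℝ} (hp : 0 < p) (hq : 0 < q) :
    IntegrableOn (fun x => x ^ (p-1) * (1-x) ^ (q-1)) (Ioc (0:ℝ) 1) := by
  have hc := (Complex.betaIntegral_convergent (u := (p:ℂ)) (v := (q:ℂ))
    (by simpa using hp) (by simpa using hq)).norm
  rw [intervalIntegrable_iff_integrableOn_Ioc_of_le (by norm_num)] at hc
  refine hc.congr_fun (fun x hx => ?_) measurableSet_Ioc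
  have hx' : x ∈ Icc (0:ℝ) 1 := Ioc_subset_Icc_self hx
  beta_reduce
  rw [beta_coe_eq hx', Complex.norm_real, Real.norm_eq_abs,
    abs_of_nonneg (mul_nonneg (Real.rpow_nonneg hx'.1 _)
      (Real.rpow_nonneg (by linarith [hx'.2] : (0:ℝ) ≤ 1 - x) _))]

lemma beta_lintegral {p q : ℝ} (hp : 0 < p) (hq : 0 < q) :
    ∫⁻ u in Ioo (0:ℝ) 1, ENNReal.ofReal (u ^ (p-1) * (1-u) ^ (q-1)) =
      ENNReal.ofReal (Real.Gamma p * Real.Gamma q / Real.Gamma (p+q)) := by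
  rw [setLIntegral_congr Ioo_ae_eq_Ioc]
  rw [← ofReal_integral_eq_lintegral_ofReal (beta_integrable hp hq)]
  · rw [← intervalIntegral.integral_of_le (by norm_num : (0:ℝ) ≤ 1), real_beta hp hq]
  · filter_upwards [ae_restrict_mem measurableSet_Ioc] with x hx
    have h1 : 0 ≤ x := le_of_lt hx.1
    have h2 : 0 ≤ 1 - x := by linarith [hx.2]
    exact mul_nonneg (Real.rpow_nonneg h1 _) (Real.rpow_nonneg h2 _)

lemma beta_lintegral_Ioi {p q : ℝ} (hp : 0 < p) (hq : 0 < q) :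
    ∫⁻ t in Ioi (0:ℝ), ENNReal.ofReal (t ^ (p-1) * (1+t) ^ (-(p+q))) =
      ENNReal.ofReal (Real.Gamma p * Real.Gamma q / Real.Gamma (p+q)) := by
  have himg : (fun u : ℝ => u / (1-u)) '' Ioo 0 1 = Ioi 0 := by
    ext t
    simp only [mem_image, mem_Ioi, mem_Ioo]
    constructor
    · rintro ⟨u, ⟨hu0, hu1⟩, rfl⟩
      exact div_pos hu0 (by linarith)
    · intro ht
      refine ⟨t / (1+t), ⟨by positivity, by rw [div_lt_one (by linarith)]; linarith⟩, ?_⟩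
      have hlt : t / (1+t) < 1 := (div_lt_one (by linarith)).mpr (by linarith)
      rw [eq_comm, eq_div_iff (by rw [sub_ne_zero]; intro h; rw [← h] at hlt; exact absurd rfl hlt.ne)]
      field_simp
      ring
  have hderiv : ∀ u ∈ Ioo (0:ℝ) 1,
      HasDerivWithinAt (fun u : ℝ => u / (1-u)) (((1-u)^2)⁻¹) (Ioo 0 1) u := by
    intro u hu
    have h1u : (1:ℝ) - u ≠ 0 := by rw [sub_ne_zero]; exact fun h => absurd h.symm (ne_of_lt hu.2)
    have h := (hasDerivAt_id u).div ((hasDerivAt_id u).const_sub 1) h1u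
    refine (h.congr_deriv ?_).hasDerivWithinAt
    simp only [id]; rw [show (1:ℝ) * (1 - u) - u * -1 = 1 by ring, one_div]
  have hinj : Set.InjOn (fun u : ℝ => u / (1-u)) (Ioo 0 1) := by
    intro a ha b hb h
    have h1a : (0:ℝ) < 1 - a := by linarith [ha.2]
    have h1b : (0:ℝ) < 1 - b := by linarith [hb.2]
    rw [div_eq_div_iff h1a.ne' h1b.ne'] at h
    nlinarith
  rw [← himg, lintegral_image_deriv measurableSet_Ioo hderiv hinj, ← beta_lintegral hp hq]
  apply setLIntegral_congr_fun measurableSet_Ioo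
  intro u hu
  beta_reduce
  have hu0 := hu.1
  have hv : (0:ℝ) < 1 - u := by linarith [hu.2]
  have habs : |(((1-u)^2)⁻¹ : ℝ)| = ((1-u)^2)⁻¹ := abs_of_pos (by positivity)
  rw [habs, ← ENNReal.ofReal_mul (by positivity)]
  congr 1
  have h1 : 1 + u / (1-u) = (1-u)⁻¹ := by
    rw [eq_comm, inv_eq_iff_eq_inv, inv_eq_one_div, eq_comm, div_eq_iff (by positivity : (1:ℝ) + u/(1-u) ≠ 0)]
    field_simp
    ring
  rw [h1, Real.inv_rpow hv.le, ← Real.rpow_neg hv.le, neg_neg,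
    Real.div_rpow hu0.le hv.le, div_eq_mul_inv, ← Real.rpow_neg hv.le]
  have hrw : (1-u) ^ (q-1) = ((1-u)^2)⁻¹ * ((1-u) ^ (-(p-1)) * (1-u) ^ (p+q)) := by
    rw [show (((1-u)^2)⁻¹ : ℝ) = (1-u) ^ (-2:ℝ) by
      rw [Real.rpow_neg hv.le, Real.rpow_two],
      ← Real.rpow_add hv, ← Real.rpow_add hv]
    congr 1
    ring
  rw [hrw]
  ring

lemma scaled_beta_lintegral {p q s : ℝ} (hp : 0 < p) (hq : 0 < q) (hs : 0 < s) :
    ∫⁻ t in Ioi (0:ℝ), ENNReal.ofReal (t ^ (p-1) * (s+t) ^ (-(p+q))) =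
      ENNReal.ofReal (s ^ (-q) * (Real.Gamma p * Real.Gamma q / Real.Gamma (p+q))) := by
  have himg : (fun u : ℝ => s * u) '' Ioi 0 = Ioi 0 := by
    ext t
    simp only [mem_image, mem_Ioi]
    constructor
    · rintro ⟨u, hu, rfl⟩; positivity
    · intro ht; exact ⟨t / s, by positivity, by field_simp⟩
  have hderiv : ∀ u ∈ Ioi (0:ℝ),
      HasDerivWithinAt (fun u : ℝ => s * u) s (Ioi 0) u := by
    intro u _
    exact (by simpa using (hasDerivAt_id u).const_mul s : HasDerivAt (fun u : ℝ => s * u) s u).hasDerivWithinAt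
  have hinj : Set.InjOn (fun u : ℝ => s * u) (Ioi 0) :=
    fun a _ b _ h => mul_left_cancel₀ hs.ne' h
  rw [← himg, lintegral_image_deriv measurableSet_Ioi hderiv hinj]
  have : ∫⁻ u in Ioi (0:ℝ),
      ENNReal.ofReal |s| * ENNReal.ofReal ((s*u) ^ (p-1) * (s+s*u) ^ (-(p+q))) =
      ∫⁻ u in Ioi (0:ℝ), ENNReal.ofReal (s^(-q)) * ENNReal.ofReal (u ^ (p-1) * (1+u) ^ (-(p+q))) := by
    apply setLIntegral_congr_fun measurableSet_Ioi
    intro u hu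
    beta_reduce
    rw [← ENNReal.ofReal_mul (abs_nonneg s), ← ENNReal.ofReal_mul (Real.rpow_nonneg hs.le _)]
    congr 1
    have hu0 : (0:ℝ) < u := hu
    have e1 : s ^ (-q) = s ^ (1:ℝ) * s ^ (p-1) * s ^ (-(p+q)) := by
      rw [← Real.rpow_add hs, ← Real.rpow_add hs]; congr 1; ring
    rw [abs_of_pos hs, show s + s*u = s*(1+u) by ring,
      Real.mul_rpow hs.le hu0.le, Real.mul_rpow hs.le (by linarith : (0:ℝ) ≤ 1+u)]
    rw [Real.rpow_one] at e1
    rw [e1]; ring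
  rw [this, lintegral_const_mul' _ _ ENNReal.ofReal_ne_top, beta_lintegral_Ioi hp hq,
    ← ENNReal.ofReal_mul (Real.rpow_nonneg hs.le _)]

/-- The square of the Euclidean norm on `ℝ²`. -/
noncomputable def sqnorm (x : ℝ × ℝ) : ℝ := x.1 ^ 2 + x.2 ^ 2

/-- The weak weighted norm `[V]_α = sup_{t>0} t^{1+α/2} ∫_{{|x|² V(x)₊ > t}} |x|⁻² dx`. -/
noncomputable def weakNorm (α : ℝ) (V : ℝ × ℝ → ℝ) : ℝ≥0∞ :=
  ⨆ (t : ℝ) (_ : 0 < t), ENNReal.ofReal (t ^ (1 + α / 2)) *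
    ∫⁻ x in {x : ℝ × ℝ | t < sqnorm x * max (V x) 0}, ENNReal.ofReal (sqnorm x)⁻¹

theorem layer_cake_estimate (α β s : ℝ) (hα : 0 < α) (hβ : 0 < β) (hβα : β < α)
    (hs : 0 < s) (V : ℝ × ℝ → ℝ) (hV : Measurable V) (hV0 : ∀ x, 0 ≤ V x)
    (hfin : weakNorm α V < ⊤) :
    ∫⁻ x : ℝ × ℝ,
        ENNReal.ofReal ((max (sqnorm x * V x - s) 0) ^ (1 + β / 2) / sqnorm x) ≤
      ENNReal.ofReal
          (Real.Gamma (2 + β / 2) * Real.Gamma ((α - β) / 2) / Real.Gamma (1 + α / 2) *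
            s ^ ((β - α) / 2)) *
        weakNorm α V := by
  set p : ℝ := 1 + β / 2 with hp_def
  set q : ℝ := (α - β) / 2 with hq_def
  have hp : 0 < p := by rw [hp_def]; linarith
  have hq : 0 < q := by rw [hq_def]; linarith
  have hpq : p + q = 1 + α / 2 := by rw [hp_def, hq_def]; ring
  have msq : Measurable sqnorm :=
    ((measurable_fst.pow_const 2).add (measurable_snd.pow_const 2))
  set f : ℝ × ℝ → ℝ := fun x => max (sqnorm x * V x - s) 0 with hf_def
  have f_mble : Measurable f := ((msq.mul hV).sub measurable_const).max measurable_const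
  have f_nn : ∀ x, 0 ≤ f x := fun x => le_max_right _ _
  set μ : Measure (ℝ × ℝ) := volume.withDensity (fun x => ENNReal.ofReal (sqnorm x)⁻¹)
    with hμ_def
  have hdens : Measurable fun x : ℝ × ℝ => ENNReal.ofReal (sqnorm x)⁻¹ :=
    msq.inv.ennreal_ofReal
  set W : ℝ≥0∞ := weakNorm α V with hW_def
  have hW_top : W ≠ ⊤ := hfin.ne
  -- Step 1: rewrite LHS as integral w.r.t. μ
  have step1 : ∫⁻ x : ℝ × ℝ, ENNReal.ofReal (f x ^ p / sqnorm x) =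
      ∫⁻ x, ENNReal.ofReal (f x ^ p) ∂μ := by
    rw [hμ_def, lintegral_withDensity_eq_lintegral_mul volume hdens
      ((by fun_prop : Measurable fun x => f x ^ p).ennreal_ofReal)]
    apply lintegral_congr fun x => ?_
    simp only [Pi.mul_apply]
    rw [div_eq_mul_inv, ENNReal.ofReal_mul (Real.rpow_nonneg (f_nn x) p), mul_comm]
  -- Step 2: layer cake
  have step2 : ∫⁻ x, ENNReal.ofReal (f x ^ p) ∂μ =
      ENNReal.ofReal p * ∫⁻ t in Ioi (0:ℝ),
        μ {a | t < f a} * ENNReal.ofReal (t ^ (p - 1)) :=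
    lintegral_rpow_eq_lintegral_meas_lt_mul μ (ae_of_all _ f_nn) f_mble.aemeasurable hp
  -- Step 3: pointwise bound on the distribution function
  have step3 : ∀ t : ℝ, 0 < t →
      μ {a | t < f a} ≤ W * ENNReal.ofReal ((s + t) ^ (-(p+q))) := by
    intro t ht
    have hst : 0 < s + t := by linarith
    have hset : {a : ℝ × ℝ | t < f a} =
        {x : ℝ × ℝ | s + t < sqnorm x * max (V x) 0} := by
      ext a
      simp only [hf_def, mem_setOf_eq, lt_max_iff]
      rw [max_eq_left (hV0 a)]
      constructor
      · rintro (h | h)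
        · linarith
        · linarith
      · intro h; left; linarith
    have hSmeas : MeasurableSet {x : ℝ × ℝ | s + t < sqnorm x * max (V x) 0} :=
      measurableSet_lt measurable_const (msq.mul (hV.max measurable_const))
    have hμS : μ {a : ℝ × ℝ | t < f a} =
        ∫⁻ x in {x : ℝ × ℝ | s + t < sqnorm x * max (V x) 0},
          ENNReal.ofReal (sqnorm x)⁻¹ := by
      rw [hset, hμ_def, withDensity_apply _ hSmeas]
    have key : ENNReal.ofReal ((s+t) ^ (1 + α / 2)) * μ {a : ℝ × ℝ | t < f a} ≤ W := by
      rw [hμS, hW_def, weakNorm]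
      exact le_iSup₂ (f := fun (r : ℝ) (_ : 0 < r) => ENNReal.ofReal (r ^ (1 + α / 2)) *
        ∫⁻ x in {x : ℝ × ℝ | r < sqnorm x * max (V x) 0},
          ENNReal.ofReal (sqnorm x)⁻¹) (s+t) hst
    have h0 : ENNReal.ofReal ((s+t) ^ (1 + α / 2)) ≠ 0 :=
      (ENNReal.ofReal_pos.mpr (Real.rpow_pos_of_pos hst _)).ne'
    have hmuleq : μ {a : ℝ × ℝ | t < f a} ≤ W / ENNReal.ofReal ((s+t) ^ (1 + α / 2)) := by
      rw [ENNReal.le_div_iff_mul_le (Or.inl h0) (Or.inl ENNReal.ofReal_ne_top)]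
      rwa [mul_comm]
    calc μ {a : ℝ × ℝ | t < f a}
        ≤ W / ENNReal.ofReal ((s+t) ^ (1 + α / 2)) := hmuleq
      _ = W * ENNReal.ofReal ((s + t) ^ (-(p+q))) := by
          rw [div_eq_mul_inv, ← ENNReal.ofReal_inv_of_pos (Real.rpow_pos_of_pos hst _),
            ← Real.rpow_neg hst.le, hpq]
  -- Step 4: bound the t-integral
  have step4 : ∫⁻ t in Ioi (0:ℝ), μ {a | t < f a} * ENNReal.ofReal (t ^ (p - 1)) ≤
      W * ENNReal.ofReal (s ^ (-q) * (Real.Gamma p * Real.Gamma q / Real.Gamma (p+q))) := by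
    have hb : ∫⁻ t in Ioi (0:ℝ), μ {a | t < f a} * ENNReal.ofReal (t ^ (p - 1)) ≤
        ∫⁻ t in Ioi (0:ℝ), W * ENNReal.ofReal (t ^ (p-1) * (s+t) ^ (-(p+q))) := by
      apply setLIntegral_mono' measurableSet_Ioi
      intro t ht
      calc μ {a | t < f a} * ENNReal.ofReal (t ^ (p - 1))
          ≤ (W * ENNReal.ofReal ((s + t) ^ (-(p+q)))) * ENNReal.ofReal (t ^ (p - 1)) :=
            mul_le_mul_left (step3 t ht) _
        _ = W * ENNReal.ofReal (t ^ (p-1) * (s+t) ^ (-(p+q))) := by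
            have ht' : (0:ℝ) < t := mem_Ioi.mp ht
            rw [mul_assoc, ← ENNReal.ofReal_mul (Real.rpow_nonneg (by linarith : (0:ℝ) ≤ s+t) _),
              mul_comm ((s+t) ^ (-(p+q))) _]
    rw [lintegral_const_mul' _ _ hW_top, scaled_beta_lintegral hp hq hs] at hb
    exact hb
  -- Assemble
  calc ∫⁻ x : ℝ × ℝ, ENNReal.ofReal (f x ^ p / sqnorm x)
      = ENNReal.ofReal p * ∫⁻ t in Ioi (0:ℝ),
          μ {a | t < f a} * ENNReal.ofReal (t ^ (p - 1)) := by rw [step1, step2]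
    _ ≤ ENNReal.ofReal p *
          (W * ENNReal.ofReal (s ^ (-q) * (Real.Gamma p * Real.Gamma q / Real.Gamma (p+q)))) :=
        mul_le_mul_right step4 _
    _ = ENNReal.ofReal (Real.Gamma (2 + β / 2) * Real.Gamma ((α - β) / 2) / Real.Gamma (1 + α / 2) *
            s ^ ((β - α) / 2)) * W := by
        rw [mul_comm W _, ← mul_assoc, ← ENNReal.ofReal_mul hp.le]
        congr 2
        rw [show (2 + β / 2 : ℝ) = p + 1 by rw [hp_def]; ring,
          Real.Gamma_add_one hp.ne', show ((β - α) / 2 : ℝ) = -q by rw [hq_def]; ring,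
          ← hpq, ← hq_def]
        ring
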